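/- Let φ: X → X be a homeomorphism of a topological space, A: X × ℝ → X × ℝ defined by A(x,s) = (φ_s(x), s) for a family (φ_s) with φ_0 = id and φ_{s+1} = φ_s ∘ φ, R_t(x,s) := (x, s+t), and B(x,s) := (φ^{-1}(x), s+1). If σ̃ is a Borel measure on X × ℝ invariant under g̃_t := A ∘ R_t ∘ A^{-1} for all t, then σ̃ = A_* (m ⊗ ds) for some Borel measure m on X; moreover σ̃ is R_1-invariant if and only if B_*(m ⊗ ds) = m ⊗ ds, which holds if and only if m is φ-invariant. -/

import Mathlib

open MeasureTheory Filter Set Topology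
open scoped ENNReal NNReal

/-- A σ-finite measure on `X × ℝ` invariant under all vertical translations is a product
measure `m ⊗ volume`. -/
lemma aux_prod_decomp {X : Type*} [MeasurableSpace X] (ν : Measure (X × ℝ)) [SigmaFinite ν]
    (hν : ∀ t : ℝ, Measure.map (fun p : X × ℝ => (p.1, p.2 + t)) ν = ν) :
    ∃ m : Measure X, SigmaFinite m ∧ ν = m.prod volume := by
  have hRt : ∀ t : ℝ, Measurable (fun p : X × ℝ => (p.1, p.2 + t)) :=
    fun t => measurable_fst.prodMk (measurable_snd.add_const t)
  -- preimage invariance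
  have hpre : ∀ (t : ℝ) (S : Set (X × ℝ)), MeasurableSet S →
      ν ((fun p : X × ℝ => (p.1, p.2 + t)) ⁻¹' S) = ν S := by
    intro t S hS
    rw [← Measure.map_apply (hRt t) hS, hν t]
  -- the candidate measure
  set m : Measure X := Measure.map Prod.fst (ν.restrict (univ ×ˢ Ico (0:ℝ) 1)) with hmdef
  have hm : ∀ E : Set X, MeasurableSet E → m E = ν (E ×ˢ Ico (0:ℝ) 1) := by
    intro E hE
    rw [hmdef, Measure.map_apply measurable_fst hE,
      Measure.restrict_apply (measurable_fst hE)]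
    congr 1
    ext p
    simp [Set.mem_prod, and_comm]
  -- translated unit slabs
  have hslab : ∀ (a : ℝ) (E : Set X), MeasurableSet E →
      ν (E ×ˢ Ico a (a + 1)) = ν (E ×ˢ Ico (0:ℝ) 1) := by
    intro a E hE
    have := hpre a (E ×ˢ Ico a (a+1)) (hE.prod measurableSet_Ico)
    rw [← this]
    congr 1
    ext p
    simp only [mem_preimage, mem_prod, mem_Ico]
    constructor
    · rintro ⟨h1, h2, h3⟩; exact ⟨h1, by linarith, by linarith⟩
    · rintro ⟨h1, h2, h3⟩; exact ⟨h1, by linarith, by linarith⟩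
  -- σ-finiteness of m
  have hmsf : SigmaFinite m := by
    set T : ℕ → Set (X × ℝ) := fun n => spanningSets ν n ∩ (univ ×ˢ Icc (-(n:ℝ)) n) with hT
    have hTmeas : ∀ n, MeasurableSet (T n) :=
      fun n => (measurableSet_spanningSets ν n).inter (MeasurableSet.univ.prod measurableSet_Icc)
    have hTfin : ∀ n, ν (T n) < ⊤ :=
      fun n => lt_of_le_of_lt (measure_mono inter_subset_left) (measure_spanningSets_lt_top ν n)
    have hTmono : Monotone T := by
      intro i j hij
      refine inter_subset_inter (monotone_spanningSets ν hij) (prod_mono subset_rfl ?_)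
      exact Icc_subset_Icc (neg_le_neg (Nat.cast_le.2 hij)) (Nat.cast_le.2 hij)
    have hTunion : ⋃ n, T n = univ := by
      ext p
      simp only [mem_iUnion, mem_univ, iff_true]
      obtain ⟨n₀, hn₀⟩ : ∃ n, p ∈ spanningSets ν n := by
        have : p ∈ ⋃ n, spanningSets ν n := by rw [iUnion_spanningSets]; trivial
        exact mem_iUnion.mp this
      obtain ⟨n₁, hn₁⟩ := exists_nat_ge |p.2|
      refine ⟨max n₀ n₁, monotone_spanningSets ν (le_max_left _ _) hn₀, mem_univ _, ?_, ?_⟩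
      · have : (n₁:ℝ) ≤ (max n₀ n₁ : ℕ) := Nat.cast_le.2 (le_max_right _ _)
        have h2 := abs_le.1 (hn₁.trans' le_rfl)
        linarith [h2.1]
      · have : (n₁:ℝ) ≤ (max n₀ n₁ : ℕ) := Nat.cast_le.2 (le_max_right _ _)
        have h2 := abs_le.1 (hn₁.trans' le_rfl)
        linarith [h2.2]
    -- slice functions
    set g : ℕ → X → ℝ≥0∞ := fun n x => volume (Prod.mk x ⁻¹' T n) with hg
    have hgmeas : ∀ n, Measurable (g n) :=
      fun n => measurable_measure_prodMk_left (hTmeas n)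
    set E : ℕ → Set X := fun n => {x | 1 < g n x} with hE
    have hEmeas : ∀ n, MeasurableSet (E n) :=
      fun n => measurableSet_lt measurable_const (hgmeas n)
    have hEunion : ⋃ n, E n = univ := by
      ext x
      simp only [mem_iUnion, mem_univ, iff_true, hE, mem_setOf_eq]
      by_contra hcon
      push_neg at hcon
      have hmon : Monotone (fun n => Prod.mk x ⁻¹' T n) := fun i j h => preimage_mono (hTmono h)
      have h1 : volume (⋃ n, Prod.mk x ⁻¹' T n) = ⨆ n, g n x :=
        hmon.directed_le.measure_iUnion
      have h2 : (⋃ n, Prod.mk x ⁻¹' T n) = univ := by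
        rw [← preimage_iUnion, hTunion, preimage_univ]
      rw [h2] at h1
      have h3 : (⨆ n, g n x) ≤ 1 := iSup_le hcon
      rw [← h1] at h3
      simp at h3
    -- the Fubini estimate: m (E n) < ∞
    have hEfin : ∀ n, m (E n) < ⊤ := by
      intro n
      set W : Set ((X × ℝ) × ℝ) :=
        ((fun q : (X × ℝ) × ℝ => (q.1.1, q.1.2 + q.2)) ⁻¹' T n) ∩
          ((E n ×ˢ Ico (0:ℝ) 1) ×ˢ univ) with hW
      have hWmeas : MeasurableSet W := by
        refine MeasurableSet.inter ?_ ?_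
        · exact (measurable_fst.fst.prodMk (measurable_fst.snd.add measurable_snd)) (hTmeas n)
        · exact ((hEmeas n).prod measurableSet_Ico).prod MeasurableSet.univ
      -- lower bound
      have hlow : ν (E n ×ˢ Ico (0:ℝ) 1) ≤ (ν.prod volume) W := by
        rw [Measure.prod_apply hWmeas]
        have hslice : ∀ p : X × ℝ,
            volume (Prod.mk p ⁻¹' W) = (E n ×ˢ Ico (0:ℝ) 1).indicator (fun p => g n p.1) p := by
          intro p
          by_cases hp : p ∈ E n ×ˢ Ico (0:ℝ) 1
          · rw [indicator_of_mem hp]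
            have : Prod.mk p ⁻¹' W = (fun t : ℝ => p.2 + t) ⁻¹' (Prod.mk p.1 ⁻¹' T n) := by
              ext t
              simp only [hW, mem_preimage, mem_inter_iff, mem_prod, mem_univ, and_true,
                mem_preimage]
              exact and_iff_left hp
            rw [this, measure_preimage_add]
          · rw [indicator_of_notMem hp]
            have : Prod.mk p ⁻¹' W = ∅ := by
              ext t
              simp only [hW, mem_preimage, mem_inter_iff, mem_prod, mem_univ, and_true,
                mem_empty_iff_false, iff_false]
              exact fun h => hp h.2
            rw [this, measure_empty]
        calc ν (E n ×ˢ Ico (0:ℝ) 1) = ∫⁻ p in E n ×ˢ Ico (0:ℝ) 1, 1 ∂ν :=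
              (setLIntegral_one _).symm
          _ ≤ ∫⁻ p in E n ×ˢ Ico (0:ℝ) 1, g n p.1 ∂ν := by
              refine setLIntegral_mono ((hgmeas n).comp measurable_fst) ?_
              intro p hp
              exact le_of_lt hp.1
          _ = ∫⁻ p, volume (Prod.mk p ⁻¹' W) ∂ν := by
              rw [← lintegral_indicator ((hEmeas n).prod measurableSet_Ico)]
              exact lintegral_congr fun p => (hslice p).symm
      -- upper bound
      have hup : (ν.prod volume) W ≤ (2 * n + 1) * ν (T n) := by
        rw [Measure.prod_apply_symm hWmeas]
        have hslice : ∀ t : ℝ,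
            ν ((fun x : X × ℝ => (x, t)) ⁻¹' W) ≤
              (Icc (-(n:ℝ) - 1) n).indicator (fun _ => ν (T n)) t := by
          intro t
          by_cases ht : t ∈ Icc (-(n:ℝ) - 1) n
          · rw [indicator_of_mem ht]
            have hsub : (fun x : X × ℝ => (x, t)) ⁻¹' W ⊆
                (fun p : X × ℝ => (p.1, p.2 + t)) ⁻¹' T n := by
              intro p hp
              exact hp.1
            exact le_of_le_of_eq (measure_mono hsub) (hpre t (T n) (hTmeas n))
          · rw [indicator_of_notMem ht]
            have : (fun x : X × ℝ => (x, t)) ⁻¹' W = ∅ := by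
              ext p
              simp only [hW, mem_preimage, mem_inter_iff, mem_prod, mem_univ, and_true,
                mem_empty_iff_false, iff_false]
              rintro ⟨h1, h2⟩
              have hs2 : p.2 + t ∈ Icc (-(n:ℝ)) n := h1.2.2
              have hs1 : p.2 ∈ Ico (0:ℝ) 1 := h2.2
              simp only [mem_Icc] at hs2 ht
              simp only [mem_Ico] at hs1
              rcases lt_or_ge t (-(n:ℝ) - 1) with h | h
              · nlinarith [hs2.1, hs1.2]
              · exact absurd ⟨h, by nlinarith [hs2.2, hs1.1]⟩ ht
            rw [this, measure_empty]
        calc ∫⁻ t, ν ((fun x : X × ℝ => (x, t)) ⁻¹' W) ∂volume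
            ≤ ∫⁻ t, (Icc (-(n:ℝ) - 1) n).indicator (fun _ => ν (T n)) t ∂volume :=
              lintegral_mono hslice
          _ = ν (T n) * volume (Icc (-(n:ℝ) - 1) n) := by
              rw [lintegral_indicator measurableSet_Icc, setLIntegral_const]
          _ ≤ (2 * n + 1) * ν (T n) := by
              rw [Real.volume_Icc]
              rw [mul_comm]
              gcongr
              rw [show (n:ℝ) - (-(n:ℝ) - 1) = 2 * n + 1 by ring]
              rw [ENNReal.ofReal_add (by positivity) (by norm_num)]
              simp [ENNReal.ofReal_mul, ENNReal.ofReal_natCast]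
      have : m (E n) ≤ (2 * n + 1) * ν (T n) := by
        rw [hm (E n) (hEmeas n)]
        exact hlow.trans hup
      refine lt_of_le_of_lt this (ENNReal.mul_lt_top ?_ (hTfin n))
      exact lt_top_iff_ne_top.2 (by simp [ENNReal.add_ne_top, ENNReal.mul_ne_top])
    exact Measure.sigmaFinite_of_countable (countable_range E)
      (by rintro s ⟨n, rfl⟩; exact hEfin n)
      (by rw [sUnion_range]; exact hEunion)
  haveI := hmsf
  -- product formula for sets of finite m-measure
  have hprod_fin : ∀ E : Set X, MeasurableSet E → m E < ⊤ →
      ∀ T : Set ℝ, MeasurableSet T → ν (E ×ˢ T) = m E * volume T := by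
    intro E hE hEfin
    set μE : Measure ℝ := Measure.map Prod.snd (ν.restrict (E ×ˢ univ)) with hμEdef
    have hμE : ∀ T : Set ℝ, MeasurableSet T → μE T = ν (E ×ˢ T) := by
      intro T hT
      rw [hμEdef, Measure.map_apply measurable_snd hT,
        Measure.restrict_apply (measurable_snd hT)]
      congr 1
      ext p
      simp [Set.mem_prod, and_comm]
    have hunit : ∀ a : ℝ, μE (Ico a (a + 1)) = m E := by
      intro a
      rw [hμE _ measurableSet_Ico, hslab a E hE, ← hm E hE]
    haveI hinvE : μE.IsAddLeftInvariant := by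
      constructor
      intro a
      ext T hT
      rw [Measure.map_apply (measurable_const_add a) hT,
        hμE _ (measurable_const_add a hT), hμE _ hT]
      have h := hpre a (E ×ˢ T) (hE.prod hT)
      rw [← h]
      congr 1
      ext p
      simp only [mem_preimage, mem_prod]
      constructor
      · rintro ⟨h1, h2⟩; exact ⟨h1, by simpa [add_comm] using h2⟩
      · rintro ⟨h1, h2⟩; exact ⟨h1, by simpa [add_comm] using h2⟩
    haveI hfinK : IsFiniteMeasureOnCompacts μE := by
      constructor
      intro K hK
      obtain ⟨r, hr⟩ := hK.isBounded.subset_closedBall 0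
      obtain ⟨n, hn⟩ := exists_nat_ge r
      have hKsub : K ⊆ Icc (-(n:ℝ)) n := by
        intro x hx
        have := hr hx
        rw [Real.closedBall_eq_Icc] at this
        simp only [zero_sub, zero_add, mem_Icc] at this
        exact ⟨by linarith [this.1], by linarith [this.2]⟩
      have hcover : Icc (-(n:ℝ)) n ⊆
          ⋃ j ∈ Finset.range (2 * n + 1), Ico ((-(n:ℝ)) + j) ((-(n:ℝ)) + j + 1) := by
        intro x hx
        simp only [mem_Icc] at hx
        have hx0 : (0:ℝ) ≤ x + n := by linarith [hx.1]
        refine mem_iUnion₂.2 ⟨⌊x + (n:ℝ)⌋₊, ?_, ?_, ?_⟩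
        · rw [Finset.mem_range]
          have h1 : ⌊x + (n:ℝ)⌋₊ ≤ ⌊((2 * n : ℕ) : ℝ)⌋₊ :=
            Nat.floor_mono (by push_cast; linarith [hx.2])
          rw [Nat.floor_natCast] at h1
          omega
        · have := Nat.floor_le hx0
          linarith
        · have := Nat.lt_floor_add_one (x + (n:ℝ))
          linarith
      have hbound : μE K ≤ (2 * n + 1 : ℕ) * m E := by
        calc μE K ≤ μE (⋃ j ∈ Finset.range (2 * n + 1),
              Ico ((-(n:ℝ)) + j) ((-(n:ℝ)) + j + 1)) :=
              measure_mono (hKsub.trans hcover)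
          _ ≤ ∑ j ∈ Finset.range (2 * n + 1), μE (Ico ((-(n:ℝ)) + j) ((-(n:ℝ)) + j + 1)) :=
              measure_biUnion_finset_le _ _
          _ = ∑ _j ∈ Finset.range (2 * n + 1), m E := by
              refine Finset.sum_congr rfl fun j _ => hunit _
          _ = (2 * n + 1 : ℕ) * m E := by
              rw [Finset.sum_const, Finset.card_range, nsmul_eq_mul]
      exact lt_of_le_of_lt hbound (ENNReal.mul_lt_top (ENNReal.natCast_lt_top _) hEfin)
    haveI : SigmaFinite μE := inferInstance
    have hsmul := μE.isAddLeftInvariant_eq_smul volume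
    have hc : ((Measure.addHaarScalarFactor μE volume : ℝ≥0) : ℝ≥0∞) = m E := by
      have h1 := congrArg (fun μ : Measure ℝ => μ (Ico (0:ℝ) 1)) hsmul
      simp only [Measure.smul_apply] at h1
      have h0 : μE (Ico (0:ℝ) 1) = m E := by simpa using hunit 0
      rw [h0] at h1
      rw [h1, ENNReal.smul_def, Real.volume_Ico]
      simp
    intro T hT
    rw [← hμE T hT, hsmul]
    simp only [Measure.smul_apply]
    rw [ENNReal.smul_def, hc, smul_eq_mul]
  -- product formula in general
  have hprod : ∀ E : Set X, MeasurableSet E → ∀ T : Set ℝ, MeasurableSet T →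
      ν (E ×ˢ T) = m E * volume T := by
    intro E hE T hT
    have hmonoF : Monotone fun j => E ∩ spanningSets m j :=
      fun i j h => inter_subset_inter_right _ (monotone_spanningSets m h)
    have hU2 : ⋃ j, E ∩ spanningSets m j = E := by
      rw [← inter_iUnion, iUnion_spanningSets, inter_univ]
    have hU1 : ⋃ j, (E ∩ spanningSets m j) ×ˢ T = E ×ˢ T := by
      rw [← iUnion_prod_const, hU2]
    have h1 : ν (E ×ˢ T) = ⨆ j, ν ((E ∩ spanningSets m j) ×ˢ T) := by
      rw [← hU1]
      exact Directed.measure_iUnion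
        (Monotone.directed_le fun i j h => prod_mono (hmonoF h) subset_rfl)
    have h2 : m E = ⨆ j, m (E ∩ spanningSets m j) := by
      conv_lhs => rw [← hU2]
      exact hmonoF.directed_le.measure_iUnion
    rw [h1, h2, ENNReal.iSup_mul]
    exact iSup_congr fun j => hprod_fin _ (hE.inter (measurableSet_spanningSets m j))
      (lt_of_le_of_lt (measure_mono inter_subset_right) (measure_spanningSets_lt_top m j)) T hT
  exact ⟨m, hmsf, (Measure.prod_eq fun s t hs ht => hprod s hs t ht).symm⟩

/-- Decomposition of a suspension-flow-invariant measure on `X × ℝ`: if `σ` is invariant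
under `g̃_t = A ∘ R_t ∘ A⁻¹` for all `t`, where `A(x,s) = (φ_s x, s)` for an isotopy with
`φ₀ = id`, `φ_{s+1} = φ_s ∘ φ`, then `σ = A_*(m ⊗ ds)`; moreover `σ` is `R₁`-invariant iff
`B_*(m ⊗ ds) = m ⊗ ds` (with `B(x,s) = (φ⁻¹ x, s+1)`), which holds iff `m` is `φ`-invariant. -/
theorem stmt10 {X : Type*} [TopologicalSpace X] [MeasurableSpace X] [BorelSpace X]
    (φ : X ≃ₜ X) (φs : ℝ → X ≃ₜ X)
    (h0 : φs 0 = Homeomorph.refl X)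
    (hper : ∀ s : ℝ, φs (s + 1) = φ.trans (φs s))
    (A : (X × ℝ) ≃ₜ (X × ℝ))
    (hA : ∀ p : X × ℝ, A p = (φs p.2 p.1, p.2))
    (σ : Measure (X × ℝ)) [SigmaFinite σ]
    (hinv : ∀ t : ℝ,
      Measure.map (fun p : X × ℝ => A ((A.symm p).1, (A.symm p).2 + t)) σ = σ) :
    ∃ m : Measure X, SigmaFinite m ∧
      σ = Measure.map A (m.prod volume) ∧
      ((Measure.map (fun p : X × ℝ => (p.1, p.2 + 1)) σ = σ) ↔
        Measure.map (fun p : X × ℝ => (φ.symm p.1, p.2 + 1)) (m.prod volume)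
          = m.prod volume) ∧
      ((Measure.map (fun p : X × ℝ => (φ.symm p.1, p.2 + 1)) (m.prod volume)
          = m.prod volume) ↔
        Measure.map φ m = m) := by
  have hAm : Measurable (A : X × ℝ → X × ℝ) := A.continuous.measurable
  have hAsm : Measurable (A.symm : X × ℝ → X × ℝ) := A.symm.continuous.measurable
  have hRt : ∀ t : ℝ, Measurable (fun p : X × ℝ => (p.1, p.2 + t)) :=
    fun t => measurable_fst.prodMk (measurable_snd.add_const t)
  set ν : Measure (X × ℝ) := Measure.map A.symm σ with hνdef
  haveI hνsf : SigmaFinite ν := by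
    have : ν = Measure.map (A.symm.toMeasurableEquiv) σ := by
      rw [hνdef, Homeomorph.toMeasurableEquiv_coe]
    rw [this]
    exact (A.symm.toMeasurableEquiv).sigmaFinite_map
  have hAA : Measure.map A ν = σ := by
    rw [hνdef, Measure.map_map hAm hAsm]
    have : (⇑A ∘ ⇑A.symm) = id := by
      funext p; simp
    rw [this, Measure.map_id]
  have hcomp : ∀ t : ℝ, Measure.map (fun p : X × ℝ => (p.1, p.2 + t)) ν = ν := by
    intro t
    have hgm : Measurable (fun p : X × ℝ => A ((A.symm p).1, (A.symm p).2 + t)) :=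
      hAm.comp (((measurable_fst.comp hAsm)).prodMk
        ((measurable_snd.comp hAsm).add_const t))
    rw [hνdef, Measure.map_map (hRt t) hAsm]
    conv_rhs => rw [← hinv t]
    rw [Measure.map_map hAsm hgm]
    congr 1
    funext p
    simp [Function.comp]
  obtain ⟨m, hmsf, hprod⟩ := aux_prod_decomp ν hcomp
  haveI := hmsf
  have hσ : σ = Measure.map A (m.prod volume) := by
    rw [← hprod, hAA]
  have hBm : Measurable (fun p : X × ℝ => (φ.symm p.1, p.2 + 1)) :=
    (φ.symm.continuous.measurable.comp measurable_fst).prodMk (measurable_snd.add_const 1)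
  -- R₁ ∘ A = A ∘ B
  have hR1B : (fun p : X × ℝ => (p.1, p.2 + 1)) ∘ ⇑A
      = ⇑A ∘ (fun p : X × ℝ => (φ.symm p.1, p.2 + 1)) := by
    funext p
    simp only [Function.comp_apply, hA]
    rw [hper p.2]
    simp [Homeomorph.trans_apply]
  -- first iff
  have hiff1 : (Measure.map (fun p : X × ℝ => (p.1, p.2 + 1)) σ = σ) ↔
      Measure.map (fun p : X × ℝ => (φ.symm p.1, p.2 + 1)) (m.prod volume)
        = m.prod volume := by
    rw [hσ, Measure.map_map (hRt 1) hAm, hR1B, ← Measure.map_map hAm hBm]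
    constructor
    · intro h
      have h2 := congrArg (Measure.map ⇑A.symm) h
      rw [Measure.map_map hAsm hAm, Measure.map_map hAsm hAm] at h2
      have hid : (⇑A.symm ∘ ⇑A) = id := by funext p; simp
      rw [hid, Measure.map_id, Measure.map_id] at h2
      exact h2
    · intro h
      rw [h]
  -- second iff
  have hmap_prod : Measure.map (fun p : X × ℝ => (φ.symm p.1, p.2 + 1)) (m.prod volume)
      = (Measure.map φ.symm m).prod volume := by
    have h1 : (fun p : X × ℝ => (φ.symm p.1, p.2 + 1))
        = Prod.map ⇑φ.symm (fun s : ℝ => s + 1) := rfl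
    rw [h1, ← Measure.map_prod_map _ _ φ.symm.continuous.measurable
      (measurable_add_const 1)]
    congr 1
    exact Measure.IsAddRightInvariant.map_add_right_eq_self (μ := (volume : Measure ℝ)) 1
  have hiff2 : (Measure.map (fun p : X × ℝ => (φ.symm p.1, p.2 + 1)) (m.prod volume)
      = m.prod volume) ↔ Measure.map φ m = m := by
    rw [hmap_prod]
    constructor
    · intro h
      have hsymm : Measure.map ⇑φ.symm m = m := by
        ext E hE
        have h2 := congrArg (fun μ : Measure (X × ℝ) => μ (E ×ˢ Ico (0:ℝ) 1)) h
        simpa [Measure.prod_prod, Real.volume_Ico] using h2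
      have := congrArg (Measure.map ⇑φ) hsymm
      rw [Measure.map_map φ.continuous.measurable φ.symm.continuous.measurable] at this
      have hid : (⇑φ ∘ ⇑φ.symm) = id := by funext x; simp
      rw [hid, Measure.map_id] at this
      exact this.symm
    · intro h
      have hsymm : Measure.map ⇑φ.symm m = m := by
        conv_lhs => rw [← h]
        rw [Measure.map_map φ.symm.continuous.measurable φ.continuous.measurable]
        have hid : (⇑φ.symm ∘ ⇑φ) = id := by funext x; simp
        rw [hid, Measure.map_id]
      rw [hsymm]
  exact ⟨m, hmsf, hσ, hiff1, hiff2⟩
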